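/- Let u : ℝ → ℝ be four times continuously differentiable in a neighborhood of 0 and let s ∈ ℝ with s ≠ 0 be fixed. Then there exist C > 0 and h₀ > 0 such that for every 0 < h < h₀ and every pair λ₁, λ₂ ∈ ℝ satisfying the MQ interpolation conditions λ₁ + λ₂·√(1 + s·h²) = u(0) and λ₁·√(1 + s·h²) + λ₂ = u(h), the interpolant I(x) = λ₁·√(1 + s·x²) + λ₂·√(1 + s·(x − h)²) satisfies |u(h/2) − I(h/2) − (1/8)·(s·u(h/2) − u''(h/2))·h²| ≤ C·h⁴. -/

import Mathlib

open Set

private lemma mvt_pow {f f' : ℝ → ℝ} {δ C : ℝ} {n : ℕ} (hC : 0 ≤ C)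
    (hd : ∀ x, |x| ≤ δ → HasDerivAt f (f' x) x)
    (hb : ∀ x, |x| ≤ δ → |f' x| ≤ C * |x| ^ n)
    (h0 : f 0 = 0) :
    ∀ x, |x| ≤ δ → |f x| ≤ C * |x| ^ (n + 1) := by
  intro x hx
  have key := Convex.norm_image_sub_le_of_norm_hasDerivWithin_le
    (f := f) (f' := f') (s := Icc (-|x|) |x|) (C := C * |x| ^ n)
    (fun y hy => (hd y ((abs_le.mpr ⟨hy.1, hy.2⟩).trans hx)).hasDerivWithinAt)
    (fun y hy => by
      have h1 : |y| ≤ |x| := abs_le.mpr ⟨hy.1, hy.2⟩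
      calc ‖f' y‖ = |f' y| := rfl
        _ ≤ C * |y| ^ n := hb y (h1.trans hx)
        _ ≤ C * |x| ^ n := by
            exact mul_le_mul_of_nonneg_left (pow_le_pow_left₀ (abs_nonneg _) h1 n) hC)
    (convex_Icc _ _)
    ⟨neg_nonpos.mpr (abs_nonneg x), abs_nonneg x⟩
    ⟨neg_abs_le x, le_abs_self x⟩
  simp only [h0, sub_zero, Real.norm_eq_abs] at key
  calc |f x| ≤ C * |x| ^ n * |x| := key
    _ = C * |x| ^ (n + 1) := by ring

private lemma deriv_chain {f : ℝ → ℝ} {n : ℕ} (hf : ContDiffAt ℝ n f 0) :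
    ∃ δ > 0, ∃ M > 0,
      (∀ k < n, ∀ x : ℝ, |x| ≤ δ → HasDerivAt (iteratedDeriv k f) (iteratedDeriv (k + 1) f x) x) ∧
      (∀ x : ℝ, |x| ≤ δ → |iteratedDeriv n f x| ≤ M) := by
  obtain ⟨V, hVmem, hV⟩ := hf.contDiffOn le_rfl (by simp)
  set O := interior V with hOdef
  have hO : IsOpen O := isOpen_interior
  have h0O : (0 : ℝ) ∈ O := mem_interior_iff_mem_nhds.2 hVmem
  have hfO : ContDiffOn ℝ n f O := hV.mono interior_subset
  have hEq : ∀ k : ℕ, Set.EqOn (iteratedDerivWithin k f O) (iteratedDeriv k f) O := by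
    intro k x hx
    rw [iteratedDerivWithin_eq_iteratedFDerivWithin, iteratedDeriv_eq_iteratedFDeriv,
      iteratedFDerivWithin_of_isOpen k hO hx]
  obtain ⟨ε, hε, hball⟩ := Metric.isOpen_iff.1 hO 0 h0O
  refine ⟨ε / 2, by positivity, ?_⟩
  have hIcc : Icc (-(ε / 2)) (ε / 2) ⊆ O := by
    intro y hy
    apply hball
    rw [Metric.mem_ball, Real.dist_eq, sub_zero]
    have := abs_le.mpr ⟨hy.1, hy.2⟩
    linarith
  have hcont : ContinuousOn (iteratedDeriv n f) O := by
    refine ContinuousOn.congr ?_ (hEq n).symm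
    exact hfO.continuousOn_iteratedDerivWithin le_rfl hO.uniqueDiffOn
  obtain ⟨M0, hM0⟩ := (isCompact_Icc (a := -(ε / 2)) (b := ε / 2)).exists_bound_of_continuousOn
    (hcont.mono hIcc)
  refine ⟨M0 + 1, ?_, ?_, ?_⟩
  · have := hM0 0 ⟨by linarith [neg_nonpos.mpr hε.le], by linarith⟩
    have : (0:ℝ) ≤ M0 := le_trans (norm_nonneg _) this
    linarith
  · intro k hk x hx
    have hxO : x ∈ O := hIcc (abs_le.mp hx |> fun h => ⟨h.1, h.2⟩)
    have hdw : DifferentiableWithinAt ℝ (iteratedDerivWithin k f O) O x :=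
      (hfO.differentiableOn_iteratedDerivWithin (by exact_mod_cast hk) hO.uniqueDiffOn) x hxO
    have hda : DifferentiableAt ℝ (iteratedDeriv k f) x := by
      have h1 : DifferentiableAt ℝ (iteratedDerivWithin k f O) x :=
        hdw.differentiableAt (hO.mem_nhds hxO)
      exact (Filter.EventuallyEq.differentiableAt_iff
        ((hEq k).eventuallyEq_of_mem (hO.mem_nhds hxO))).1 h1
    have := hda.hasDerivAt
    rwa [← iteratedDeriv_succ] at this
  · intro x hx
    have hxI : x ∈ Icc (-(ε / 2)) (ε / 2) := abs_le.mp hx |> fun h => ⟨h.1, h.2⟩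
    have := hM0 x hxI
    rw [Real.norm_eq_abs] at this
    linarith

private lemma taylor4 {f : ℝ → ℝ} (hf : ContDiffAt ℝ 4 f 0) :
    ∃ δ > 0, ∃ M > 0, ∀ x : ℝ, |x| ≤ δ →
      |f x - f 0 - iteratedDeriv 1 f 0 * x - iteratedDeriv 2 f 0 * x ^ 2 / 2
          - iteratedDeriv 3 f 0 * x ^ 3 / 6| ≤ M * x ^ 4 ∧
      |iteratedDeriv 2 f x - iteratedDeriv 2 f 0 - iteratedDeriv 3 f 0 * x| ≤ M * x ^ 2 := by
  have hf' : ContDiffAt ℝ ((4 : ℕ) : WithTop ℕ∞) f 0 := by exact_mod_cast hf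
  obtain ⟨δ, hδ, M, hM, hder, hbound⟩ := deriv_chain hf'
  refine ⟨δ, hδ, M, hM, ?_⟩
  -- chain of remainders
  have b3 : ∀ x : ℝ, |x| ≤ δ →
      |iteratedDeriv 3 f x - iteratedDeriv 3 f 0| ≤ M * |x| ^ (0 + 1) := by
    refine mvt_pow (f' := fun x => iteratedDeriv 4 f x) hM.le
      (fun x hx => (hder 3 (by norm_num) x hx).sub_const _)
      (fun x hx => by simpa using hbound x hx) (by simp)
  have b2 : ∀ x : ℝ, |x| ≤ δ →
      |iteratedDeriv 2 f x - iteratedDeriv 2 f 0 - iteratedDeriv 3 f 0 * x|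
        ≤ M * |x| ^ (1 + 1) := by
    refine mvt_pow (f' := fun x => iteratedDeriv 3 f x - iteratedDeriv 3 f 0) hM.le
      (fun x hx => ?_) (fun x hx => by simpa using b3 x hx) (by simp)
    have h1 : HasDerivAt (fun y : ℝ => iteratedDeriv 3 f 0 * y) (iteratedDeriv 3 f 0) x := by
      simpa using (hasDerivAt_id x).const_mul (iteratedDeriv 3 f 0)
    exact ((hder 2 (by norm_num) x hx).sub_const _).sub h1
  have b1 : ∀ x : ℝ, |x| ≤ δ →
      |iteratedDeriv 1 f x - iteratedDeriv 1 f 0 - iteratedDeriv 2 f 0 * x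
          - iteratedDeriv 3 f 0 * x ^ 2 / 2| ≤ M * |x| ^ (2 + 1) := by
    refine mvt_pow
      (f' := fun x => iteratedDeriv 2 f x - iteratedDeriv 2 f 0 - iteratedDeriv 3 f 0 * x) hM.le
      (fun x hx => ?_) (fun x hx => by simpa using b2 x hx) (by simp)
    have h1 : HasDerivAt (fun y : ℝ => iteratedDeriv 2 f 0 * y) (iteratedDeriv 2 f 0) x := by
      simpa using (hasDerivAt_id x).const_mul (iteratedDeriv 2 f 0)
    have h2 : HasDerivAt (fun y : ℝ => iteratedDeriv 3 f 0 * y ^ 2 / 2)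
        (iteratedDeriv 3 f 0 * x) x := by
      have := ((hasDerivAt_pow 2 x).const_mul (iteratedDeriv 3 f 0)).div_const 2
      exact this.congr_deriv (by rw [show (2:ℕ) - 1 = 1 from rfl]; push_cast; ring)
    exact (((hder 1 (by norm_num) x hx).sub_const _).sub h1).sub h2
  have b0 : ∀ x : ℝ, |x| ≤ δ →
      |f x - f 0 - iteratedDeriv 1 f 0 * x - iteratedDeriv 2 f 0 * x ^ 2 / 2
          - iteratedDeriv 3 f 0 * x ^ 3 / 6| ≤ M * |x| ^ (3 + 1) := by
    refine mvt_pow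
      (f' := fun x => iteratedDeriv 1 f x - iteratedDeriv 1 f 0 - iteratedDeriv 2 f 0 * x
          - iteratedDeriv 3 f 0 * x ^ 2 / 2) hM.le
      (fun x hx => ?_) (fun x hx => by simpa using b1 x hx) (by simp)
    have h1 : HasDerivAt (fun y : ℝ => iteratedDeriv 1 f 0 * y) (iteratedDeriv 1 f 0) x := by
      simpa using (hasDerivAt_id x).const_mul (iteratedDeriv 1 f 0)
    have h2 : HasDerivAt (fun y : ℝ => iteratedDeriv 2 f 0 * y ^ 2 / 2)
        (iteratedDeriv 2 f 0 * x) x := by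
      have := ((hasDerivAt_pow 2 x).const_mul (iteratedDeriv 2 f 0)).div_const 2
      exact this.congr_deriv (by rw [show (2:ℕ) - 1 = 1 from rfl]; push_cast; ring)
    have h3 : HasDerivAt (fun y : ℝ => iteratedDeriv 3 f 0 * y ^ 3 / 6)
        (iteratedDeriv 3 f 0 * x ^ 2 / 2) x := by
      have := ((hasDerivAt_pow 3 x).const_mul (iteratedDeriv 3 f 0)).div_const 6
      exact this.congr_deriv (by rw [show (3:ℕ) - 1 = 2 from rfl]; push_cast; ring)
    have h0 : HasDerivAt f (iteratedDeriv 1 f x) x := by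
      have := hder 0 (by norm_num) x hx
      simpa [iteratedDeriv_zero] using this
    exact (((h0.sub_const _).sub h1).sub h2).sub h3
  intro x hx
  have habs2 : |x| ^ (1 + 1) = x ^ 2 := by
    rw [show 1 + 1 = 2 by norm_num, ← abs_pow]; exact abs_of_nonneg (sq_nonneg x)
  have habs4 : |x| ^ (3 + 1) = x ^ 4 := by
    rw [show 3 + 1 = 4 by norm_num, ← abs_pow]; exact abs_of_nonneg (by positivity)
  exact ⟨by rw [← habs4]; exact b0 x hx, by rw [← habs2]; exact b2 x hx⟩

private lemma taylor2 {f : ℝ → ℝ} (hf : ContDiffAt ℝ 2 f 0) :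
    ∃ δ > 0, ∃ M > 0, ∀ x : ℝ, |x| ≤ δ →
      |f x - f 0 - deriv f 0 * x| ≤ M * x ^ 2 := by
  have hf' : ContDiffAt ℝ ((2 : ℕ) : WithTop ℕ∞) f 0 := by exact_mod_cast hf
  obtain ⟨δ, hδ, M, hM, hder, hbound⟩ := deriv_chain hf'
  refine ⟨δ, hδ, M, hM, ?_⟩
  have b1 : ∀ x : ℝ, |x| ≤ δ →
      |iteratedDeriv 1 f x - iteratedDeriv 1 f 0| ≤ M * |x| ^ (0 + 1) := by
    refine mvt_pow (f' := fun x => iteratedDeriv 2 f x) hM.le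
      (fun x hx => (hder 1 (by norm_num) x hx).sub_const _)
      (fun x hx => by simpa using hbound x hx) (by simp)
  have b0 : ∀ x : ℝ, |x| ≤ δ →
      |f x - f 0 - iteratedDeriv 1 f 0 * x| ≤ M * |x| ^ (1 + 1) := by
    refine mvt_pow (f' := fun x => iteratedDeriv 1 f x - iteratedDeriv 1 f 0) hM.le
      (fun x hx => ?_) (fun x hx => by simpa using b1 x hx) (by simp)
    have h1 : HasDerivAt (fun y : ℝ => iteratedDeriv 1 f 0 * y) (iteratedDeriv 1 f 0) x := by
      simpa using (hasDerivAt_id x).const_mul (iteratedDeriv 1 f 0)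
    have h0 : HasDerivAt f (iteratedDeriv 1 f x) x := by
      have := hder 0 (by norm_num) x hx
      simpa [iteratedDeriv_zero] using this
    exact (h0.sub_const _).sub h1
  intro x hx
  have habs2 : |x| ^ (1 + 1) = x ^ 2 := by
    rw [show 1 + 1 = 2 by norm_num, ← abs_pow]; exact abs_of_nonneg (sq_nonneg x)
  have := b0 x hx
  rwa [habs2, iteratedDeriv_one] at this

private lemma Gf_taylor : ∃ δ > 0, ∃ M > 0, ∀ t : ℝ, |t| ≤ δ →
    |Real.sqrt (1 + t / 4) / (1 + Real.sqrt (1 + t)) - 1 / 2 + t / 16| ≤ M * t ^ 2 := by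
  set G := fun t : ℝ => Real.sqrt (1 + t / 4) / (1 + Real.sqrt (1 + t)) with hGdef
  have hinner1 : ContDiffAt ℝ 2 (fun t : ℝ => 1 + t / 4) 0 :=
    (contDiff_const.add (contDiff_id.div_const 4)).contDiffAt
  have hinner2 : ContDiffAt ℝ 2 (fun t : ℝ => 1 + t) 0 :=
    (contDiff_const.add contDiff_id).contDiffAt
  have hN : ContDiffAt ℝ 2 (fun t : ℝ => Real.sqrt (1 + t / 4)) 0 := by
    have := (Real.contDiffAt_sqrt (x := 1 + (0 : ℝ) / 4) (n := 2) (by norm_num)).comp 0 hinner1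
    exact this
  have hD : ContDiffAt ℝ 2 (fun t : ℝ => 1 + Real.sqrt (1 + t)) 0 := by
    have := (Real.contDiffAt_sqrt (x := 1 + (0 : ℝ)) (n := 2) (by norm_num)).comp 0 hinner2
    exact contDiffAt_const.add this
  have hD0 : (1 : ℝ) + Real.sqrt (1 + 0) ≠ 0 := by
    rw [add_zero, Real.sqrt_one]; norm_num
  have hG2 : ContDiffAt ℝ 2 G 0 := hN.div hD hD0
  have hNd : HasDerivAt (fun t : ℝ => Real.sqrt (1 + t / 4)) (1 / 8) 0 := by
    have hin : HasDerivAt (fun t : ℝ => 1 + t / 4) (1 / 4) 0 := by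
      simpa using ((hasDerivAt_id (0 : ℝ)).div_const 4).const_add 1
    have := (Real.hasDerivAt_sqrt (x := 1 + (0 : ℝ) / 4) (by norm_num)).comp 0 hin
    have h14 : (1 : ℝ) + (0 : ℝ) / 4 = 1 := by norm_num
    exact this.congr_deriv (by rw [h14, Real.sqrt_one]; norm_num)
  have hDd : HasDerivAt (fun t : ℝ => 1 + Real.sqrt (1 + t)) (1 / 2) 0 := by
    have hin : HasDerivAt (fun t : ℝ => 1 + t) (1 : ℝ) 0 := by
      simpa using (hasDerivAt_id (0 : ℝ)).const_add 1
    have := ((Real.hasDerivAt_sqrt (x := 1 + (0 : ℝ)) (by norm_num)).comp 0 hin).const_add 1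
    simp only [Function.comp] at this
    exact this.congr_deriv (by rw [add_zero, Real.sqrt_one]; norm_num)
  have hGd : HasDerivAt G (-(1 / 16)) 0 := by
    have := hNd.div hDd hD0
    exact this.congr_deriv (by
      rw [show (1 : ℝ) + (0 : ℝ) / 4 = 1 by norm_num, add_zero, Real.sqrt_one]
      norm_num)
  obtain ⟨δ, hδ, M, hM, hb⟩ := taylor2 hG2
  refine ⟨δ, hδ, M, hM, fun t ht => ?_⟩
  have h0 : G 0 = 1 / 2 := by
    simp only [hGdef]
    rw [show (1 : ℝ) + (0 : ℝ) / 4 = 1 by norm_num, add_zero, Real.sqrt_one]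
    norm_num
  have := hb t ht
  rw [h0, hGd.deriv] at this
  have he : G t - 1 / 2 - -(1 / 16) * t = G t - 1 / 2 + t / 16 := by ring
  rw [he] at this
  exact this

private lemma abs_add_seven (a b c d e f g : ℝ) :
    |a + b + c - d - e - f + g| ≤ |a| + |b| + |c| + |d| + |e| + |f| + |g| := by
  calc |a + b + c - d - e - f + g| ≤ |a + b + c - d - e - f| + |g| := abs_add_le _ _
    _ ≤ (|a + b + c - d - e| + |f|) + |g| := add_le_add_left (abs_sub _ _) _
    _ ≤ ((|a + b + c - d| + |e|) + |f|) + |g| := by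
        have := abs_sub (a + b + c - d) e; linarith
    _ ≤ (((|a + b + c| + |d|) + |e|) + |f|) + |g| := by
        have := abs_sub (a + b + c) d; linarith
    _ ≤ ((((|a + b| + |c|) + |d|) + |e|) + |f|) + |g| := by
        have := abs_add_le (a + b) c; linarith
    _ ≤ |a| + |b| + |c| + |d| + |e| + |f| + |g| := by
        have := abs_add_le a b; linarith

private lemma abs_add_five (a b c d e : ℝ) :
    |a + b + c + d + e| ≤ |a| + |b| + |c| + |d| + |e| := by
  calc |a + b + c + d + e| ≤ |a + b + c + d| + |e| := abs_add_le _ _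
    _ ≤ (|a + b + c| + |d|) + |e| := add_le_add_left (abs_add_le _ _) _
    _ ≤ ((|a + b| + |c|) + |d|) + |e| := by have := abs_add_le (a + b) c; linarith
    _ ≤ |a| + |b| + |c| + |d| + |e| := by have := abs_add_le a b; linarith

set_option maxHeartbeats 1000000 in
/-- Two-point MQ-RBF interpolation: Taylor expansion of the midpoint error
around the midpoint `h/2`. -/
theorem stmt_0 (u : ℝ → ℝ) (s : ℝ) (hs : s ≠ 0) (hu : ContDiffAt ℝ 4 u 0) :
    ∃ C > 0, ∃ h₀ > 0, ∀ h : ℝ, 0 < h → h < h₀ →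
      ∀ l1 l2 : ℝ,
        l1 + l2 * Real.sqrt (1 + s * h ^ 2) = u 0 →
        l1 * Real.sqrt (1 + s * h ^ 2) + l2 = u h →
        |u (h / 2)
            - (l1 * Real.sqrt (1 + s * (h / 2) ^ 2)
              + l2 * Real.sqrt (1 + s * (h / 2 - h) ^ 2))
            - (1 / 8) * (s * u (h / 2) - iteratedDeriv 2 u (h / 2)) * h ^ 2|
          ≤ C * h ^ 4 := by
  obtain ⟨δ1, hδ1, M, hM, hT⟩ := taylor4 hu
  obtain ⟨δ2, hδ2, L, hL, hGb⟩ := Gf_taylor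
  have hsabs : 0 < |s| := abs_pos.mpr hs
  set A1 := iteratedDeriv 1 u 0 with hA1
  set A2 := iteratedDeriv 2 u 0 with hA2
  set A3 := iteratedDeriv 3 u 0 with hA3
  set B : ℝ := 2 * |u 0| + |A1| + |A2| + |A3| + M with hB
  have hBpos : 0 < B := by positivity
  set C : ℝ := |s| * |A2| + |s| * |A3| + 4 * M + L * s ^ 2 * B + 1 with hC
  have hCpos : 0 < C := by positivity
  refine ⟨C, hCpos, min δ1 (min 1 (min (Real.sqrt (δ2 / |s|)) (Real.sqrt (1 / (2 * |s|))))),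
    ?_, ?_⟩
  · refine lt_min hδ1 (lt_min one_pos (lt_min ?_ ?_))
    · exact Real.sqrt_pos.mpr (div_pos hδ2 hsabs)
    · exact Real.sqrt_pos.mpr (by positivity)
  intro h hh0 hh1 l1 l2 hc1 hc2
  have hhδ1 : h ≤ δ1 := le_of_lt (lt_of_lt_of_le hh1 (min_le_left _ _))
  have hh_le1 : h ≤ 1 := le_of_lt (lt_of_lt_of_le hh1 ((min_le_right _ _).trans (min_le_left _ _)))
  have hhs1 : h < Real.sqrt (δ2 / |s|) :=
    lt_of_lt_of_le hh1 ((min_le_right _ _).trans ((min_le_right _ _).trans (min_le_left _ _)))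
  have hhs2 : h < Real.sqrt (1 / (2 * |s|)) :=
    lt_of_lt_of_le hh1 ((min_le_right _ _).trans ((min_le_right _ _).trans (min_le_right _ _)))
  have hsq1 : h ^ 2 < δ2 / |s| := by
    have h1 := pow_lt_pow_left₀ (n := 2) hhs1 hh0.le (by norm_num)
    rwa [Real.sq_sqrt (le_of_lt (div_pos hδ2 hsabs))] at h1
  have hsq2 : h ^ 2 < 1 / (2 * |s|) := by
    have h1 := pow_lt_pow_left₀ (n := 2) hhs2 hh0.le (by norm_num)
    rwa [Real.sq_sqrt (le_of_lt (show (0:ℝ) < 1 / (2 * |s|) by positivity))] at h1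
  have ht2 : |s * h ^ 2| ≤ δ2 := by
    rw [abs_mul, abs_of_pos (pow_pos hh0 2)]
    calc |s| * h ^ 2 ≤ |s| * (δ2 / |s|) := mul_le_mul_of_nonneg_left hsq1.le (abs_nonneg s)
      _ = δ2 := by rw [mul_comm, div_mul_cancel₀ _ (ne_of_gt hsabs)]
  have ht12 : |s| * h ^ 2 ≤ 1 / 2 := by
    calc |s| * h ^ 2 ≤ |s| * (1 / (2 * |s|)) := mul_le_mul_of_nonneg_left hsq2.le (abs_nonneg s)
      _ = 1 / 2 := by
        rw [mul_one_div, div_eq_div_iff (by positivity) (by norm_num)]; ring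
  -- rewrite the interpolant
  have hq0 : (0:ℝ) < 1 + Real.sqrt (1 + s * h ^ 2) := by positivity
  have hsum : (l1 + l2) * (1 + Real.sqrt (1 + s * h ^ 2)) = u 0 + u h := by
    linear_combination hc1 + hc2
  have harg1 : 1 + s * (h / 2) ^ 2 = 1 + s * h ^ 2 / 4 := by ring
  have harg2 : 1 + s * (h / 2 - h) ^ 2 = 1 + s * h ^ 2 / 4 := by ring
  have hIeq : l1 * Real.sqrt (1 + s * (h / 2) ^ 2) + l2 * Real.sqrt (1 + s * (h / 2 - h) ^ 2)
      = Real.sqrt (1 + s * h ^ 2 / 4) / (1 + Real.sqrt (1 + s * h ^ 2)) * (u 0 + u h) := by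
    rw [harg1, harg2, ← hsum]
    field_simp
  rw [hIeq]
  -- Taylor remainders
  set e1 : ℝ := u h - u 0 - A1 * h - A2 * h ^ 2 / 2 - A3 * h ^ 3 / 6 with he1
  set e2 : ℝ := u (h / 2) - u 0 - A1 * (h / 2) - A2 * (h / 2) ^ 2 / 2 - A3 * (h / 2) ^ 3 / 6
    with he2
  set e3 : ℝ := iteratedDeriv 2 u (h / 2) - A2 - A3 * (h / 2) with he3
  set e4 : ℝ := Real.sqrt (1 + s * h ^ 2 / 4) / (1 + Real.sqrt (1 + s * h ^ 2))
      - 1 / 2 + s * h ^ 2 / 16 with he4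
  have hb1 : |e1| ≤ M * h ^ 4 := by
    have := (hT h (by rwa [abs_of_pos hh0])).1
    simpa [he1] using this
  have hb2 : |e2| ≤ M * (h / 2) ^ 4 := by
    have := (hT (h / 2) (by rw [abs_of_pos (by linarith)]; linarith)).1
    simpa [he2] using this
  have hb3 : |e3| ≤ M * (h / 2) ^ 2 := by
    have := (hT (h / 2) (by rw [abs_of_pos (by linarith)]; linarith)).2
    calc |e3| = |iteratedDeriv 2 u (h / 2) - iteratedDeriv 2 u 0
        - iteratedDeriv 3 u 0 * (h / 2)| := by rw [he3, hA2, hA3]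
      _ ≤ M * (h / 2) ^ 2 := this
  have hb4 : |e4| ≤ L * s ^ 2 * h ^ 4 := by
    have h1 := hGb (s * h ^ 2) ht2
    rw [← he4] at h1
    have h2 : L * (s * h ^ 2) ^ 2 = L * s ^ 2 * h ^ 4 := by ring
    linarith
  have hp2 : h ^ 2 ≤ 1 := pow_le_one₀ hh0.le hh_le1
  have hp3 : h ^ 3 ≤ 1 := pow_le_one₀ hh0.le hh_le1
  have hp4 : h ^ 4 ≤ 1 := pow_le_one₀ hh0.le hh_le1
  have hh4pos : (0:ℝ) < h ^ 4 := pow_pos hh0 4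
  -- bound on u 0 + u h
  have hBnd : |u 0 + u h| ≤ B := by
    have hrw : u 0 + u h = 2 * u 0 + A1 * h + A2 * (h ^ 2 / 2) + A3 * (h ^ 3 / 6) + e1 := by
      rw [he1]; ring
    rw [hrw]
    have habs5 := abs_add_five (2 * u 0) (A1 * h) (A2 * (h ^ 2 / 2)) (A3 * (h ^ 3 / 6)) e1
    have h1 : |2 * u 0| = 2 * |u 0| := by rw [abs_mul]; norm_num
    have h2 : |A1 * h| ≤ |A1| := by
      rw [abs_mul, abs_of_pos hh0]
      exact mul_le_of_le_one_right (abs_nonneg A1) hh_le1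
    have h3 : |A2 * (h ^ 2 / 2)| ≤ |A2| := by
      rw [abs_mul, abs_of_pos (show (0:ℝ) < h ^ 2 / 2 by positivity)]
      exact mul_le_of_le_one_right (abs_nonneg A2) (by linarith)
    have h4 : |A3 * (h ^ 3 / 6)| ≤ |A3| := by
      rw [abs_mul, abs_of_pos (show (0:ℝ) < h ^ 3 / 6 by positivity)]
      exact mul_le_of_le_one_right (abs_nonneg A3) (by linarith)
    have h5 : M * h ^ 4 ≤ M := mul_le_of_le_one_right hM.le hp4
    rw [hB]
    linarith
  -- the key algebraic identity
  have hkey : u (h / 2)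
      - Real.sqrt (1 + s * h ^ 2 / 4) / (1 + Real.sqrt (1 + s * h ^ 2)) * (u 0 + u h)
      - 1 / 8 * (s * u (h / 2) - iteratedDeriv 2 u (h / 2)) * h ^ 2
      = s * A2 * h ^ 4 / 64 + s * A3 * h ^ 5 / 128 + e2
        - (1 / 2 - s * h ^ 2 / 16) * e1 - e4 * (u 0 + u h)
        - s * h ^ 2 / 8 * e2 + h ^ 2 / 8 * e3 := by
    have hG : Real.sqrt (1 + s * h ^ 2 / 4) / (1 + Real.sqrt (1 + s * h ^ 2))
        = 1 / 2 - s * h ^ 2 / 16 + e4 := by rw [he4]; ring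
    have hum : u (h / 2) = u 0 + A1 * (h / 2) + A2 * (h / 2) ^ 2 / 2 + A3 * (h / 2) ^ 3 / 6
        + e2 := by rw [he2]; ring
    have huh : u h = u 0 + A1 * h + A2 * h ^ 2 / 2 + A3 * h ^ 3 / 6 + e1 := by
      rw [he1]; ring
    have hd2 : iteratedDeriv 2 u (h / 2) = A2 + A3 * (h / 2) + e3 := by rw [he3]; ring
    rw [hG, hd2, hum, huh]
    ring
  rw [hkey]
  -- final estimate
  have habs := abs_add_seven (s * A2 * h ^ 4 / 64) (s * A3 * h ^ 5 / 128) e2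
    ((1 / 2 - s * h ^ 2 / 16) * e1) (e4 * (u 0 + u h)) (s * h ^ 2 / 8 * e2) (h ^ 2 / 8 * e3)
  have t1 : |s * A2 * h ^ 4 / 64| ≤ |s| * |A2| * h ^ 4 := by
    rw [abs_div, abs_mul, abs_mul, abs_of_pos hh4pos, show |(64:ℝ)| = 64 by norm_num]
    have hn : (0:ℝ) ≤ |s| * |A2| * h ^ 4 := by positivity
    linarith
  have t2 : |s * A3 * h ^ 5 / 128| ≤ |s| * |A3| * h ^ 4 := by
    rw [abs_div, abs_mul, abs_mul, abs_of_pos (pow_pos hh0 5),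
      show |(128:ℝ)| = 128 by norm_num]
    have h45 : h ^ 5 ≤ h ^ 4 := pow_le_pow_of_le_one hh0.le hh_le1 (by norm_num)
    have h1 : |s| * |A3| * h ^ 5 ≤ |s| * |A3| * h ^ 4 :=
      mul_le_mul_of_nonneg_left h45 (by positivity)
    have hn : (0:ℝ) ≤ |s| * |A3| * h ^ 5 := by positivity
    linarith
  have t3 : |e2| ≤ M * h ^ 4 := by
    refine hb2.trans (mul_le_mul_of_nonneg_left ?_ hM.le)
    have : h / 2 ≤ h := by linarith
    exact pow_le_pow_left₀ (by linarith) this 4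
  have t4 : |(1 / 2 - s * h ^ 2 / 16) * e1| ≤ M * h ^ 4 := by
    rw [abs_mul]
    have hsh : |s * h ^ 2| ≤ 1 / 2 := by
      rw [abs_mul, abs_of_pos (pow_pos hh0 2)]; exact ht12
    have hsh' := abs_le.mp hsh
    have ha : |1 / 2 - s * h ^ 2 / 16| ≤ 1 := by
      rw [abs_le]; constructor <;> [linarith [hsh'.1, hsh'.2]; linarith [hsh'.1, hsh'.2]]
    calc |1 / 2 - s * h ^ 2 / 16| * |e1| ≤ 1 * (M * h ^ 4) :=
          mul_le_mul ha hb1 (abs_nonneg _) one_pos.le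
      _ = M * h ^ 4 := by ring
  have t5 : |e4 * (u 0 + u h)| ≤ L * s ^ 2 * B * h ^ 4 := by
    rw [abs_mul]
    calc |e4| * |u 0 + u h| ≤ L * s ^ 2 * h ^ 4 * B :=
          mul_le_mul hb4 hBnd (abs_nonneg _) (by positivity)
      _ = L * s ^ 2 * B * h ^ 4 := by ring
  have t6 : |s * h ^ 2 / 8 * e2| ≤ M * h ^ 4 := by
    rw [abs_mul]
    have ha : |s * h ^ 2 / 8| ≤ 1 := by
      rw [abs_div, abs_mul, abs_of_pos (pow_pos hh0 2), show |(8:ℝ)| = 8 by norm_num]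
      linarith
    calc |s * h ^ 2 / 8| * |e2| ≤ 1 * (M * h ^ 4) :=
          mul_le_mul ha t3 (abs_nonneg _) one_pos.le
      _ = M * h ^ 4 := by ring
  have t7 : |h ^ 2 / 8 * e3| ≤ M * h ^ 4 := by
    rw [abs_mul, abs_of_pos (show (0:ℝ) < h ^ 2 / 8 by positivity)]
    have h1 : h ^ 2 / 8 * |e3| ≤ h ^ 2 / 8 * (M * (h / 2) ^ 2) :=
      mul_le_mul_of_nonneg_left hb3 (by positivity)
    have h2 : h ^ 2 / 8 * (M * (h / 2) ^ 2) = M * h ^ 4 / 32 := by ring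
    have h3 : (0:ℝ) ≤ M * h ^ 4 := by positivity
    linarith
  have hsum4 : |s| * |A2| * h ^ 4 + |s| * |A3| * h ^ 4 + M * h ^ 4 + M * h ^ 4
      + L * s ^ 2 * B * h ^ 4 + M * h ^ 4 + M * h ^ 4 ≤ C * h ^ 4 := by
    have hexp : C * h ^ 4 = |s| * |A2| * h ^ 4 + |s| * |A3| * h ^ 4 + M * h ^ 4 + M * h ^ 4
        + L * s ^ 2 * B * h ^ 4 + M * h ^ 4 + M * h ^ 4 + h ^ 4 := by rw [hC]; ring
    linarith
  linarith
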